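/- arXiv:2412.13248 — 6 statements merged into one kernel-verified Lean document; each statement's English description precedes it below -/
import Mathlib

section
/- Let G = (V, E) be a graph, α ∈ (0, 1], and L a natural number. Suppose A ⊆ V satisfies that every connected subset S ⊆ V with |A ∩ S| ≥ α·|S| has |S| ≤ L, and B ⊆ V satisfies |B| ≤ L·(1 − α). Then every connected subset of A ∪ B has size at most L. -/
/-- If every connected `α`-subset of `A` has size at most `L`
(i.e. `MaxConn_α(A) ≤ L`) and `|B| ≤ L·(1-α)`, then every connected subset
of `A ∪ B` has size at most `L`. -/
theorem stmt0 {V : Type*} [Fintype V] [DecidableEq V] (G : SimpleGraph V)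
    (α : ℝ) (hα0 : 0 < α) (hα1 : α ≤ 1) (L : ℕ) (A B : Finset V)
    (hA : ∀ S : Finset V, (G.induce (S : Set V)).Connected →
      α * S.card ≤ ((A ∩ S).card : ℝ) → S.card ≤ L)
    (hB : (B.card : ℝ) ≤ L * (1 - α)) :
    ∀ S : Finset V, (G.induce (S : Set V)).Connected → S ⊆ A ∪ B → S.card ≤ L := by
  intro S hconn hsub
  by_cases h : α * S.card ≤ ((A ∩ S).card : ℝ)
  · exact hA S hconn h
  · push_neg at h
    have hcard : S.card ≤ (A ∩ S).card + B.card := by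
      calc S.card = ((A ∩ S) ∪ (B ∩ S)).card := by
            congr 1
            ext x
            simp only [Finset.mem_union, Finset.mem_inter]
            constructor
            · intro hx
              rcases Finset.mem_union.mp (hsub hx) with h' | h'
              · exact Or.inl ⟨h', hx⟩
              · exact Or.inr ⟨h', hx⟩
            · rintro (⟨_, hx⟩ | ⟨_, hx⟩) <;> exact hx
        _ ≤ (A ∩ S).card + (B ∩ S).card := Finset.card_union_le _ _
        _ ≤ (A ∩ S).card + B.card := by
            gcongr; exact Finset.inter_subset_left
    have hcardR : (S.card : ℝ) ≤ ((A ∩ S).card : ℝ) + B.card := by exact_mod_cast hcard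
    by_contra hS
    push_neg at hS
    have hSR : (L : ℝ) < S.card := by exact_mod_cast hS
    nlinarith [mul_nonneg (sub_nonneg.mpr hα1) (sub_nonneg.mpr hSR.le)]
end

section
/- Let H ∈ 𝔽₂^{m×n} with rank H = m and β > 0. Under the Gibbs distribution μ(x) ∝ e^{−β|Hx|} on 𝔽₂ⁿ, the pushforward distribution of the syndrome s = H x ∈ 𝔽₂^m is a product of i.i.d. Bernoulli random variables, each equal to 1 with probability e^{−β}/(1 + e^{−β}). -/
open Finset

lemma zmod2_cases (a : ZMod 2) : a = 0 ∨ a = 1 := by revert a; decide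

lemma exp_hamming {m : ℕ} (β : ℝ) (s : Fin m → ZMod 2) :
    Real.exp (-β * hammingNorm s) = ∏ i, (if s i = 1 then Real.exp (-β) else 1) := by
  have h1 : -β * (hammingNorm s : ℝ) = ∑ i, (if s i = 1 then -β else 0) := by
    have : (hammingNorm s : ℝ) = ∑ i, (if s i = 1 then (1:ℝ) else 0) := by
      rw [hammingNorm, Finset.card_filter]
      push_cast
      refine Finset.sum_congr rfl fun i _ => ?_
      rcases zmod2_cases (s i) with h | h <;> simp [h]
    rw [this, Finset.mul_sum]
    refine Finset.sum_congr rfl fun i _ => ?_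
    split_ifs <;> ring
  rw [h1, Real.exp_sum]
  refine Finset.prod_congr rfl fun i _ => ?_
  split_ifs <;> simp

lemma sum_exp_hamming {m : ℕ} (β : ℝ) :
    ∑ t : Fin m → ZMod 2, Real.exp (-β * hammingNorm t)
      = ∏ _i : Fin m, (1 + Real.exp (-β)) := by
  have huniv : (univ : Finset (ZMod 2)) = {0, 1} := by decide
  calc ∑ t : Fin m → ZMod 2, Real.exp (-β * hammingNorm t)
      = ∑ t : Fin m → ZMod 2, ∏ i, (if t i = 1 then Real.exp (-β) else 1) := by
        exact Finset.sum_congr rfl fun t _ => exp_hamming β t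
    _ = ∏ i : Fin m, ∑ a : ZMod 2, (if a = 1 then Real.exp (-β) else 1) := by
        rw [Finset.prod_univ_sum, Fintype.piFinset_univ]
    _ = ∏ _i : Fin m, (1 + Real.exp (-β)) := by
        refine Finset.prod_congr rfl fun i _ => ?_
        rw [huniv, Finset.sum_insert (by decide), Finset.sum_singleton]
        norm_num

/-- For full-rank `H` and `β > 0`, under the Gibbs distribution
`μ(x) ∝ e^{−β|Hx|}`, the pushforward distribution of the syndrome `s = Hx` is a
product of i.i.d. Bernoulli(`e^{−β}/(1+e^{−β})`) random variables: the probability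
of each syndrome `s` factorizes as the corresponding product over coordinates. -/
theorem stmt5 {m n : ℕ} (H : Matrix (Fin m) (Fin n) (ZMod 2))
    (hrank : H.rank = m) (β : ℝ) (hβ : 0 < β) (s : Fin m → ZMod 2) :
    (∑ x ∈ univ.filter (fun x : Fin n → ZMod 2 => H.mulVec x = s),
        Real.exp (-β * hammingNorm (H.mulVec x))) /
      (∑ x : Fin n → ZMod 2, Real.exp (-β * hammingNorm (H.mulVec x)))
      = ∏ i : Fin m,
          (if s i = 1 then Real.exp (-β) / (1 + Real.exp (-β))
           else 1 - Real.exp (-β) / (1 + Real.exp (-β))) := by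
  -- surjectivity of mulVec
  have hsurj : ∀ t : Fin m → ZMod 2, ∃ x, H.mulVec x = t := by
    have htop : LinearMap.range H.mulVecLin = ⊤ := by
      apply Submodule.eq_top_of_finrank_eq
      rw [← Matrix.rank, hrank, Module.finrank_pi]
      simp
    intro t
    obtain ⟨x, hx⟩ := (LinearMap.range_eq_top.mp htop) t
    exact ⟨x, hx⟩
  -- all fibers have the same cardinality
  set K : ℕ := #(univ.filter fun x : Fin n → ZMod 2 => H.mulVec x = 0) with hK
  have hfib : ∀ t : Fin m → ZMod 2,
      #(univ.filter fun x : Fin n → ZMod 2 => H.mulVec x = t) = K := by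
    intro t
    obtain ⟨x0, hx0⟩ := hsurj t
    have hself : ∀ v : Fin m → ZMod 2, v + v = 0 := fun v => by
      funext i; exact CharTwo.add_self_eq_zero _
    have hself' : ∀ v : Fin n → ZMod 2, v + v = 0 := fun v => by
      funext i; exact CharTwo.add_self_eq_zero _
    rw [hK]
    refine Finset.card_bij' (fun x _ => x + x0) (fun x _ => x + x0) ?_ ?_ ?_ ?_
    · intro x hx
      simp only [Finset.mem_filter, Finset.mem_univ, true_and] at hx ⊢
      rw [Matrix.mulVec_add, hx, hx0, hself]
    · intro x hx
      simp only [Finset.mem_filter, Finset.mem_univ, true_and] at hx ⊢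
      rw [Matrix.mulVec_add, hx, hx0, zero_add]
    · intro x _
      show x + x0 + x0 = x
      rw [add_assoc, hself', add_zero]
    · intro x _
      show x + x0 + x0 = x
      rw [add_assoc, hself', add_zero]
  have hKpos : 0 < K := by
    rw [hK]
    refine Finset.card_pos.mpr ⟨0, ?_⟩
    simp [Matrix.mulVec_zero]
  -- numerator
  have hnum : (∑ x ∈ univ.filter (fun x : Fin n → ZMod 2 => H.mulVec x = s),
      Real.exp (-β * hammingNorm (H.mulVec x))) = K * Real.exp (-β * hammingNorm s) := by
    rw [Finset.sum_congr rfl (fun x hx => by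
      rw [(Finset.mem_filter.mp hx).2]), Finset.sum_const, hfib s, nsmul_eq_mul]
  -- denominator
  have hden : (∑ x : Fin n → ZMod 2, Real.exp (-β * hammingNorm (H.mulVec x)))
      = K * ∏ _i : Fin m, (1 + Real.exp (-β)) := by
    rw [← Finset.sum_fiberwise univ (fun x => H.mulVec x)
      (fun x => Real.exp (-β * hammingNorm (H.mulVec x)))]
    have : ∀ t : Fin m → ZMod 2,
        (∑ x ∈ univ.filter (fun x : Fin n → ZMod 2 => H.mulVec x = t),
          Real.exp (-β * hammingNorm (H.mulVec x))) = K * Real.exp (-β * hammingNorm t) := by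
      intro t
      rw [Finset.sum_congr rfl (fun x hx => by
        rw [(Finset.mem_filter.mp hx).2]), Finset.sum_const, hfib t, nsmul_eq_mul]
    rw [Finset.sum_congr rfl (fun t _ => this t), ← Finset.mul_sum, sum_exp_hamming]
  have h1e : (0:ℝ) < 1 + Real.exp (-β) := by positivity
  have hKne : (K:ℝ) ≠ 0 := by positivity
  rw [hnum, hden, mul_div_mul_left _ _ hKne, exp_hamming, ← Finset.prod_div_distrib]
  refine Finset.prod_congr rfl fun i _ => ?_
  split_ifs
  · rfl
  · field_simp
    ring
end

section
/- For every ε > 0 there exists N such that for all n with ρn ≥ N and 0 < ρ < 1/2, the volume of the Hamming ball S_n(ρ) = Σ_{l=0}^{⌊ρn⌋} C(n, l) satisfies S_n(ρ) ≤ (1+ε)·(1/√(2π))·√n·√(ρ/(1−ρ))·Υ(ρ)ⁿ, where Υ(ρ) = ρ^{−ρ}(1−ρ)^{ρ−1}. -/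
open Finset

lemma lemA (n : ℕ) (ρ : ℝ) (h0 : 0 < ρ) (h1 : ρ < 1/2) :
    (∑ l ∈ range (⌊ρ * n⌋₊ + 1), (n.choose l : ℝ))
      ≤ (ρ ^ (-ρ) * (1 - ρ) ^ (ρ - 1)) ^ n := by
  set q : ℝ := 1 - ρ with hqdef
  have hq : 0 < q := by simp [hqdef]; linarith
  have hrq : 0 < ρ / q := div_pos h0 hq
  have hrq1 : ρ / q ≤ 1 := by
    rw [div_le_one hq]; simp [hqdef]; linarith
  set k : ℕ := ⌊ρ * n⌋₊ with hkdef
  have hkr : (k : ℝ) ≤ ρ * n := Nat.floor_le (by positivity)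
  have hkn : k ≤ n := by
    have : (k : ℝ) ≤ (n : ℝ) := hkr.trans (by nlinarith [Nat.cast_nonneg (α := ℝ) n])
    exact_mod_cast this
  -- constant c
  set c : ℝ := q ^ n * (ρ / q) ^ (ρ * n) with hcdef
  have hc : 0 < c := by positivity
  have step1 : (∑ l ∈ range (k + 1), (n.choose l : ℝ)) * c ≤ 1 := by
    rw [Finset.sum_mul]
    have h2 : ∀ l ∈ range (k + 1), (n.choose l : ℝ) * c ≤ (n.choose l : ℝ) * (ρ ^ l * q ^ (n - l)) := by
      intro l hl
      rw [mem_range, Nat.lt_succ_iff] at hl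
      have hln : l ≤ n := hl.trans hkn
      apply mul_le_mul_of_nonneg_left _ (by positivity)
      have e1 : ρ ^ l * q ^ (n - l) = q ^ n * (ρ / q) ^ l := by
        rw [div_pow, pow_sub₀ q (ne_of_gt hq) hln]
        field_simp
      rw [e1, hcdef]
      apply mul_le_mul_of_nonneg_left _ (by positivity)
      rw [← Real.rpow_natCast (ρ / q) l]
      apply Real.rpow_le_rpow_of_exponent_ge hrq hrq1
      calc (l : ℝ) ≤ (k : ℝ) := by exact_mod_cast hl
        _ ≤ ρ * n := hkr
    calc ∑ l ∈ range (k + 1), (n.choose l : ℝ) * c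
        ≤ ∑ l ∈ range (k + 1), (n.choose l : ℝ) * (ρ ^ l * q ^ (n - l)) :=
          Finset.sum_le_sum h2
      _ ≤ ∑ l ∈ range (n + 1), (n.choose l : ℝ) * (ρ ^ l * q ^ (n - l)) := by
          apply Finset.sum_le_sum_of_subset_of_nonneg
          · exact Finset.range_subset_range.2 (by omega)
          · intro i _ _; positivity
      _ = (ρ + q) ^ n := by
          rw [add_pow]
          apply Finset.sum_congr rfl
          intro i _; ring
      _ = 1 := by simp [hqdef]
  -- identify c⁻¹ with the target
  have hT : c * (ρ ^ (-ρ) * q ^ (ρ - 1)) ^ n = 1 := by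
    have hρnn : (0:ℝ) ≤ ρ := le_of_lt h0
    have hqnn : (0:ℝ) ≤ q := le_of_lt hq
    rw [hcdef, Real.div_rpow hρnn hqnn, ← Real.rpow_natCast (ρ ^ (-ρ) * q ^ (ρ - 1)) n,
      Real.mul_rpow (by positivity) (by positivity),
      ← Real.rpow_natCast q n,
      ← Real.rpow_mul hρnn, ← Real.rpow_mul hqnn]
    rw [show q ^ (↑n:ℝ) * (ρ ^ (ρ * ↑n) / q ^ (ρ * ↑n)) * (ρ ^ (-ρ * ↑n) * q ^ ((ρ - 1) * ↑n))
        = (ρ ^ (ρ * ↑n) * ρ ^ (-ρ * ↑n)) * (q ^ (↑n:ℝ) * q ^ (-(ρ * ↑n)) * q ^ ((ρ - 1) * ↑n))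
        from by rw [Real.rpow_neg hqnn]; ring]
    rw [← Real.rpow_add h0, ← Real.rpow_add hq, ← Real.rpow_add hq,
      show ρ * ↑n + -ρ * ↑n = 0 by ring, show (↑n:ℝ) + -(ρ * ↑n) + (ρ - 1) * ↑n = 0 by ring]
    norm_num
  have hcT : (ρ ^ (-ρ) * q ^ (ρ - 1)) ^ n = c⁻¹ := by
    field_simp at hT ⊢
    linarith [hT]
  rw [hcT, ← one_div, le_div_iff₀ hc]
  exact step1

/-- asymptotic upper bound on the volume of the Hamming ball:
for every `ε > 0` there is `N` such that whenever `ρ·n ≥ N` and `0 < ρ < 1/2`,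
`S_n(ρ) = Σ_{l ≤ ρn} C(n,l) ≤ (1+ε)·(1/√(2π))·√n·√(ρ/(1−ρ))·Υ(ρ)^n`
with `Υ(ρ) = ρ^{−ρ}(1−ρ)^{ρ−1}`. -/

theorem stmt8 : ∀ ε : ℝ, 0 < ε → ∃ N : ℕ, ∀ (n : ℕ) (ρ : ℝ),
    0 < ρ → ρ < 1/2 → (N : ℝ) ≤ ρ * n →
    (∑ l ∈ range (⌊ρ * n⌋₊ + 1), (n.choose l : ℝ))
      ≤ (1 + ε) * (1 / Real.sqrt (2 * Real.pi)) * Real.sqrt n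
          * Real.sqrt (ρ / (1 - ρ)) * (ρ ^ (-ρ) * (1 - ρ) ^ (ρ - 1)) ^ n := by
  intro ε hε
  refine ⟨7, fun n ρ h0 h1 hN => ?_⟩
  have hq : 0 < 1 - ρ := by linarith
  have hN' : (7:ℝ) ≤ ρ * n := by exact_mod_cast hN
  have hcn : (0:ℝ) ≤ (n:ℝ) := Nat.cast_nonneg n
  have hU : 0 < (ρ ^ (-ρ) * (1 - ρ) ^ (ρ - 1)) ^ n := by positivity
  have hπ : 0 < 2 * Real.pi := by positivity
  have h7 : 2 * Real.pi ≤ 7 := by nlinarith [Real.pi_lt_d2]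
  have hsq : Real.sqrt (2 * Real.pi) ≤ Real.sqrt n * Real.sqrt (ρ / (1 - ρ)) := by
    rw [← Real.sqrt_mul hcn]
    apply Real.sqrt_le_sqrt
    have hρdiv : ρ ≤ ρ / (1 - ρ) := by
      rw [le_div_iff₀ hq]; nlinarith
    nlinarith [mul_le_mul_of_nonneg_left hρdiv hcn]
  have hs : 0 < Real.sqrt (2 * Real.pi) := Real.sqrt_pos.2 hπ
  have key : 1 ≤ (1 + ε) * (1 / Real.sqrt (2 * Real.pi)) * Real.sqrt n
      * Real.sqrt (ρ / (1 - ρ)) := by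
    have h1' : 1 ≤ 1 / Real.sqrt (2 * Real.pi) * Real.sqrt n * Real.sqrt (ρ / (1 - ρ)) := by
      rw [one_div, mul_assoc, inv_mul_eq_div, le_div_iff₀ hs, one_mul]
      exact hsq
    calc (1:ℝ) ≤ 1 / Real.sqrt (2 * Real.pi) * Real.sqrt n * Real.sqrt (ρ / (1 - ρ)) := h1'
      _ ≤ (1 + ε) * (1 / Real.sqrt (2 * Real.pi) * Real.sqrt n * Real.sqrt (ρ / (1 - ρ))) := by
          apply le_mul_of_one_le_left (by positivity) (by linarith)
      _ = (1 + ε) * (1 / Real.sqrt (2 * Real.pi)) * Real.sqrt n * Real.sqrt (ρ / (1 - ρ)) := by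
          ring
  calc (∑ l ∈ range (⌊ρ * n⌋₊ + 1), (n.choose l : ℝ))
      ≤ (ρ ^ (-ρ) * (1 - ρ) ^ (ρ - 1)) ^ n := lemA n ρ h0 h1
    _ ≤ (1 + ε) * (1 / Real.sqrt (2 * Real.pi)) * Real.sqrt n * Real.sqrt (ρ / (1 - ρ))
        * (ρ ^ (-ρ) * (1 - ρ) ^ (ρ - 1)) ^ n := le_mul_of_one_le_left hU.le key
end

section
/- The number p(n) of integer partitions of n satisfies p(n) < e^{π√(2n/3)} for all n ≥ 1. -/
open Finset Real

-- sum of parts expressed through counts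
lemma aux_part_sum (n : ℕ) (P : n.Partition) :
    ∑ i ∈ Finset.range n, (i + 1) * P.parts.count (i + 1) = n := by
  have hub : ∀ a ∈ P.parts, a ≤ n := by
    intro a ha
    calc a ≤ P.parts.sum := Multiset.le_sum_of_mem ha
    _ = n := P.parts_sum
  have h1 := Finset.sum_multiset_count P.parts
  rw [P.parts_sum] at h1
  have hsub : P.parts.toFinset ⊆ Finset.Icc 1 n := by
    intro a ha
    rw [Multiset.mem_toFinset] at ha
    exact Finset.mem_Icc.2 ⟨P.parts_pos ha, hub a ha⟩
  have h2 : ∑ m ∈ P.parts.toFinset, P.parts.count m • m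
      = ∑ m ∈ Finset.Icc 1 n, P.parts.count m • m := by
    refine Finset.sum_subset hsub ?_
    intro x _ hx
    rw [Multiset.mem_toFinset] at hx
    simp [Multiset.count_eq_zero_of_notMem hx]
  have h3 : ∑ m ∈ Finset.Icc 1 n, P.parts.count m • m
      = ∑ i ∈ Finset.range n, P.parts.count (1 + i) • (1 + i) := by
    rw [← Finset.Ico_add_one_right_eq_Icc, Finset.sum_Ico_eq_sum_range]
    simp
  calc ∑ i ∈ Finset.range n, (i + 1) * P.parts.count (i + 1)
      = ∑ i ∈ Finset.range n, P.parts.count (1 + i) • (1 + i) := by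
        refine Finset.sum_congr rfl fun i _ => ?_
        rw [smul_eq_mul, add_comm 1 i, mul_comm]
    _ = n := by rw [← h3, ← h2, ← h1]

lemma aux_count_le (n : ℕ) (P : n.Partition) (k : ℕ) : P.parts.count k ≤ n := by
  calc P.parts.count k ≤ Multiset.card P.parts := Multiset.count_le_card _ _
  _ = Multiset.card P.parts • 1 := (smul_eq_mul _ _ |>.trans (mul_one _)).symm
  _ ≤ P.parts.sum := Multiset.card_nsmul_le_sum fun x hx => P.parts_pos hx
  _ = n := P.parts_sum

-- combinatorial bound
set_option maxHeartbeats 1000000 in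
lemma aux_comb (n : ℕ) {x : ℝ} (hx0 : 0 ≤ x) :
    (Fintype.card (Nat.Partition n) : ℝ) * x ^ n
      ≤ ∏ i : Fin n, ∑ m ∈ Finset.range (n + 1), x ^ (((i : ℕ) + 1) * m) := by
  classical
  rw [Finset.prod_univ_sum]
  set ψ : n.Partition → (Fin n → ℕ) := fun P i => P.parts.count ((i : ℕ) + 1) with hψ
  have hinj : ∀ P₁ ∈ (Finset.univ : Finset n.Partition), ∀ P₂ ∈ Finset.univ,
      ψ P₁ = ψ P₂ → P₁ = P₂ := by
    intro P₁ _ P₂ _ h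
    have hub : ∀ (P : n.Partition) a, a ∈ P.parts → a ≤ n := by
      intro P a ha
      calc a ≤ P.parts.sum := Multiset.le_sum_of_mem ha
      _ = n := P.parts_sum
    have : P₁.parts = P₂.parts := by
      ext a
      rcases Nat.eq_zero_or_pos a with rfl | hapos
      · rw [Multiset.count_eq_zero_of_notMem (fun hm => lt_irrefl 0 (P₁.parts_pos hm)),
          Multiset.count_eq_zero_of_notMem (fun hm => lt_irrefl 0 (P₂.parts_pos hm))]
      · rcases le_or_gt a n with han | han
        · have hia : a - 1 < n := by omega
          have := congrFun h ⟨a - 1, hia⟩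
          simpa [ψ, Nat.sub_add_cancel hapos] using this
        · rw [Multiset.count_eq_zero_of_notMem (fun hm => absurd (hub P₁ a hm) (not_le.2 han)),
            Multiset.count_eq_zero_of_notMem (fun hm => absurd (hub P₂ a hm) (not_le.2 han))]
    cases P₁; cases P₂; simpa using this
  have himg : Finset.image ψ Finset.univ ⊆ Fintype.piFinset fun _ : Fin n =>
      Finset.range (n + 1) := by
    intro g hg
    rw [Finset.mem_image] at hg
    obtain ⟨P, _, rfl⟩ := hg
    rw [Fintype.mem_piFinset]
    intro i
    exact Finset.mem_range.2 (Nat.lt_succ_of_le (aux_count_le n P _))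
  calc (Fintype.card (Nat.Partition n) : ℝ) * x ^ n
      = ∑ P : n.Partition, x ^ n := by rw [Finset.sum_const, Finset.card_univ, nsmul_eq_mul]
    _ = ∑ P : n.Partition, ∏ i : Fin n, x ^ (((i : ℕ) + 1) * ψ P i) := by
        refine Finset.sum_congr rfl fun P _ => ?_
        rw [Finset.prod_pow_eq_pow_sum]
        congr 1
        refine ((Fin.sum_univ_eq_sum_range (fun i => (i + 1) * P.parts.count (i + 1)) n).trans
          (aux_part_sum n P)).symm
    _ = ∑ g ∈ Finset.image ψ Finset.univ, ∏ i : Fin n, x ^ (((i : ℕ) + 1) * g i) :=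
        (Finset.sum_image (f := fun g : Fin n → ℕ => ∏ i : Fin n, x ^ (((i : ℕ) + 1) * g i)) hinj).symm
    _ ≤ ∑ g ∈ Fintype.piFinset (fun _ : Fin n => Finset.range (n + 1)),
          ∏ i : Fin n, x ^ (((i : ℕ) + 1) * g i) := by
        refine Finset.sum_le_sum_of_subset_of_nonneg himg fun g _ _ => ?_
        exact Finset.prod_nonneg fun i _ => pow_nonneg hx0 _

-- geometric sum bound
lemma aux_geom (n k : ℕ) {x : ℝ} (hx0 : 0 ≤ x) (hx1 : x < 1) :
    ∑ m ∈ Finset.range (n + 1), x ^ ((k + 1) * m) ≤ (1 - x ^ (k + 1))⁻¹ := by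
  have hy0 : 0 ≤ x ^ (k + 1) := pow_nonneg hx0 _
  have hy1 : x ^ (k + 1) < 1 := pow_lt_one₀ hx0 hx1 (Nat.succ_ne_zero k)
  calc ∑ m ∈ Finset.range (n + 1), x ^ ((k + 1) * m)
      = ∑ m ∈ Finset.range (n + 1), (x ^ (k + 1)) ^ m := by
        refine Finset.sum_congr rfl fun m _ => ?_; rw [← pow_mul]
    _ ≤ ∑' m : ℕ, (x ^ (k + 1)) ^ m := by
        refine Summable.sum_le_tsum _ (fun m _ => pow_nonneg hy0 _) ?_
        exact summable_geometric_of_lt_one hy0 hy1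
    _ = (1 - x ^ (k + 1))⁻¹ := tsum_geometric_of_lt_one hy0 hy1

lemma aux_geo_sum {y : ℝ} (h0 : 0 ≤ y) (h1 : y < 1) (n : ℕ) :
    ∑ k ∈ Finset.range n, y ^ k ≤ (1 - y)⁻¹ := by
  calc ∑ k ∈ Finset.range n, y ^ k ≤ ∑' k : ℕ, y ^ k :=
        Summable.sum_le_tsum _ (fun k _ => pow_nonneg h0 _) (summable_geometric_of_lt_one h0 h1)
    _ = (1 - y)⁻¹ := tsum_geometric_of_lt_one h0 h1

lemma aux_one_sub_pow {x : ℝ} (hx0 : 0 ≤ x) (hx1 : x ≤ 1) (j : ℕ) :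
    ((j : ℝ) + 1) * x ^ j * (1 - x) ≤ 1 - x ^ (j + 1) := by
  have hgs : (1 - x) * ∑ i ∈ Finset.range (j + 1), x ^ i = 1 - x ^ (j + 1) := by
    have := geom_sum_mul x (j + 1)
    nlinarith [this]
  have hlb : ((j : ℝ) + 1) * x ^ j ≤ ∑ i ∈ Finset.range (j + 1), x ^ i := by
    have : ∀ i ∈ Finset.range (j + 1), x ^ j ≤ x ^ i := fun i hi =>
      pow_le_pow_of_le_one hx0 hx1 (Nat.lt_succ_iff.1 (Finset.mem_range.1 hi))
    calc ((j : ℝ) + 1) * x ^ j = ∑ _i ∈ Finset.range (j + 1), x ^ j := by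
          rw [Finset.sum_const, Finset.card_range, nsmul_eq_mul]; push_cast; ring
      _ ≤ ∑ i ∈ Finset.range (j + 1), x ^ i := Finset.sum_le_sum this
  nlinarith [pow_nonneg hx0 j]

lemma aux_logsum (n : ℕ) {x : ℝ} (hx0 : 0 < x) (hx1 : x < 1) :
    ∑ k ∈ Finset.range n, -Real.log (1 - x ^ (k + 1))
      ≤ π ^ 2 / 6 * (x / (1 - x)) := by
  have hxp : ∀ m : ℕ, 0 ≤ x ^ m := fun m => pow_nonneg hx0.le m
  have hxl : ∀ m : ℕ, m ≠ 0 → x ^ m < 1 := fun m hm => pow_lt_one₀ hx0.le hx1 hm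
  have hxabs : ∀ k : ℕ, |x ^ (k + 1)| < 1 := fun k => by
    rw [abs_of_nonneg (hxp _)]; exact hxl _ k.succ_ne_zero
  have hsummable : ∀ k : ℕ, Summable fun j : ℕ => (x ^ (k + 1)) ^ (j + 1) / ((j : ℝ) + 1) :=
    fun k => (hasSum_pow_div_log_of_abs_lt_one (hxabs k)).summable
  have hz : HasSum (fun j : ℕ => (1 : ℝ) / ((j : ℝ) + 1) ^ 2) (π ^ 2 / 6) := by
    have h0 : HasSum (fun m : ℕ => (1 : ℝ) / (m : ℝ) ^ 2) (π ^ 2 / 6) := hasSum_zeta_two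
    have h1 : HasSum (fun j : ℕ => (1 : ℝ) / ((j + 1 : ℕ) : ℝ) ^ 2) (π ^ 2 / 6) := by
      rw [hasSum_nat_add_iff (f := fun m : ℕ => (1 : ℝ) / (m : ℝ) ^ 2) 1]
      simpa using h0
    convert h1 using 2 with j
    push_cast
    ring
  have hbound : ∀ j : ℕ, ∑ k ∈ Finset.range n, (x ^ (k + 1)) ^ (j + 1) / ((j : ℝ) + 1)
      ≤ x / (1 - x) * (1 / ((j : ℝ) + 1) ^ 2) := by
    intro j
    have hj1 : (0 : ℝ) < (j : ℝ) + 1 := by positivity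
    set y : ℝ := x ^ (j + 1) with hy
    have hy0 : 0 ≤ y := hxp _
    have hy1 : y < 1 := hxl _ j.succ_ne_zero
    have h1y : 0 < 1 - y := by linarith
    have h1x : 0 < 1 - x := by linarith
    have hsum : ∑ k ∈ Finset.range n, (x ^ (k + 1)) ^ (j + 1) ≤ y * (1 - y)⁻¹ := by
      have heq : ∀ k : ℕ, (x ^ (k + 1)) ^ (j + 1) = y * y ^ k := by
        intro k
        rw [hy, ← pow_mul, ← pow_mul, ← pow_add]
        congr 1
        ring
      calc ∑ k ∈ Finset.range n, (x ^ (k + 1)) ^ (j + 1)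
          = y * ∑ k ∈ Finset.range n, y ^ k := by
            rw [Finset.mul_sum]; exact Finset.sum_congr rfl fun k _ => heq k
        _ ≤ y * (1 - y)⁻¹ := by
            exact mul_le_mul_of_nonneg_left (aux_geo_sum hy0 hy1 n) hy0
    have hkey := aux_one_sub_pow hx0.le hx1.le j
    have hyx : y * (1 - y)⁻¹ ≤ x / (((j : ℝ) + 1) * (1 - x)) := by
      rw [← div_eq_mul_inv, div_le_div_iff₀ h1y (by positivity)]
      have h2 := mul_le_mul_of_nonneg_left hkey hx0.le
      rw [← hy] at h2
      have hyeq : x * x ^ j = y := by rw [hy, pow_succ']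
      calc y * ((↑j + 1) * (1 - x)) = x * ((↑j + 1) * x ^ j * (1 - x)) := by
            rw [← hyeq]; ring
        _ ≤ x * (1 - y) := h2
    calc ∑ k ∈ Finset.range n, (x ^ (k + 1)) ^ (j + 1) / ((j : ℝ) + 1)
        = (∑ k ∈ Finset.range n, (x ^ (k + 1)) ^ (j + 1)) / ((j : ℝ) + 1) :=
          (Finset.sum_div _ _ _).symm
      _ ≤ (y * (1 - y)⁻¹) / ((j : ℝ) + 1) := by gcongr
      _ ≤ (x / (((j : ℝ) + 1) * (1 - x))) / ((j : ℝ) + 1) := by gcongr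
      _ = x / (1 - x) * (1 / ((j : ℝ) + 1) ^ 2) := by
          field_simp
  have hrhs_summable : Summable fun j : ℕ => x / (1 - x) * (1 / ((j : ℝ) + 1) ^ 2) :=
    hz.summable.mul_left _
  have hmid_nonneg : ∀ j : ℕ,
      0 ≤ ∑ k ∈ Finset.range n, (x ^ (k + 1)) ^ (j + 1) / ((j : ℝ) + 1) := fun j =>
    Finset.sum_nonneg fun k _ => div_nonneg (pow_nonneg (hxp _) _) (by positivity)
  have hmid_summable : Summable fun j : ℕ =>
      ∑ k ∈ Finset.range n, (x ^ (k + 1)) ^ (j + 1) / ((j : ℝ) + 1) :=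
    Summable.of_nonneg_of_le hmid_nonneg hbound hrhs_summable
  calc ∑ k ∈ Finset.range n, -Real.log (1 - x ^ (k + 1))
      = ∑ k ∈ Finset.range n, ∑' j : ℕ, (x ^ (k + 1)) ^ (j + 1) / ((j : ℝ) + 1) :=
        Finset.sum_congr rfl fun k _ =>
          ((hasSum_pow_div_log_of_abs_lt_one (hxabs k)).tsum_eq).symm
    _ = ∑' j : ℕ, ∑ k ∈ Finset.range n, (x ^ (k + 1)) ^ (j + 1) / ((j : ℝ) + 1) :=
        (Summable.tsum_finsetSum fun k _ => hsummable k).symm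
    _ ≤ ∑' j : ℕ, x / (1 - x) * (1 / ((j : ℝ) + 1) ^ 2) :=
        Summable.tsum_le_tsum hbound hmid_summable hrhs_summable
    _ = x / (1 - x) * (π ^ 2 / 6) := (hz.mul_left _).tsum_eq
    _ = π ^ 2 / 6 * (x / (1 - x)) := mul_comm _ _

lemma aux_prod (n : ℕ) {x : ℝ} (hx0 : 0 < x) (hx1 : x < 1) :
    ∏ k ∈ Finset.range n, (1 - x ^ (k + 1))⁻¹
      ≤ Real.exp (π ^ 2 / 6 * (x / (1 - x))) := by
  have hpos : ∀ k : ℕ, 0 < 1 - x ^ (k + 1) := fun k =>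
    sub_pos.2 (pow_lt_one₀ hx0.le hx1 k.succ_ne_zero)
  have heq : ∏ k ∈ Finset.range n, (1 - x ^ (k + 1))⁻¹
      = Real.exp (∑ k ∈ Finset.range n, -Real.log (1 - x ^ (k + 1))) := by
    rw [Real.exp_sum]
    refine Finset.prod_congr rfl fun k _ => ?_
    rw [Real.exp_neg, Real.exp_log (hpos k)]
  rw [heq]
  exact Real.exp_le_exp.2 (aux_logsum n hx0 hx1)

/-- the number of integer partitions of `n` satisfies
`p(n) < e^{π√(2n/3)}` for all `n ≥ 1`. -/
theorem stmt9 (n : ℕ) (hn : 1 ≤ n) :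
    (Fintype.card (Nat.Partition n) : ℝ)
      < Real.exp (Real.pi * Real.sqrt (2 * n / 3)) := by
  have hπ := Real.pi_pos
  have hn0 : (0 : ℝ) < n := by exact_mod_cast hn
  set s : ℝ := Real.sqrt (n / 6) with hs
  have hspos : 0 < s := Real.sqrt_pos.2 (by positivity)
  have hs2 : s ^ 2 = n / 6 := Real.sq_sqrt (by positivity)
  set t : ℝ := 6 * s / π with ht
  have htpos : 0 < t := by positivity
  set x : ℝ := t / (1 + t) with hxdef
  have hx0 : 0 < x := by positivity
  have hx1 : x < 1 := by
    rw [hxdef, div_lt_one (by positivity)]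
    linarith
  have hxfrac : x / (1 - x) = t := by
    rw [hxdef]
    have h1t : (0 : ℝ) < 1 + t := by positivity
    field_simp
    ring
  have hxinv : x⁻¹ = 1 + 1 / t := by
    rw [hxdef, inv_div]
    field_simp
    ring
  have hcard : (Fintype.card (Nat.Partition n) : ℝ) * x ^ n ≤ Real.exp (π * s) := by
    calc (Fintype.card (Nat.Partition n) : ℝ) * x ^ n
        ≤ ∏ i : Fin n, ∑ m ∈ Finset.range (n + 1), x ^ (((i : ℕ) + 1) * m) :=
          aux_comb n hx0.le
      _ ≤ ∏ i : Fin n, (1 - x ^ ((i : ℕ) + 1))⁻¹ := by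
          refine Finset.prod_le_prod (fun i _ => ?_) (fun i _ => aux_geom n (i : ℕ) hx0.le hx1)
          exact Finset.sum_nonneg fun m _ => pow_nonneg hx0.le _
      _ = ∏ k ∈ Finset.range n, (1 - x ^ (k + 1))⁻¹ :=
          Fin.prod_univ_eq_prod_range (fun k => (1 - x ^ (k + 1))⁻¹) n
      _ ≤ Real.exp (π ^ 2 / 6 * (x / (1 - x))) := aux_prod n hx0 hx1
      _ = Real.exp (π * s) := by
          rw [hxfrac, ht]
          congr 1
          field_simp
  have hxn : 0 < x ^ n := pow_pos hx0 n
  have hcard2 : (Fintype.card (Nat.Partition n) : ℝ) ≤ Real.exp (π * s) * (x⁻¹) ^ n := by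
    rw [inv_pow, ← div_eq_mul_inv, le_div_iff₀ hxn]
    exact hcard
  have hfact : (x⁻¹) ^ n < Real.exp (π * s) := by
    have h1t : (0 : ℝ) < 1 / t := by positivity
    have hlt : x⁻¹ < Real.exp (1 / t) := by
      rw [hxinv]
      have := Real.add_one_lt_exp (ne_of_gt h1t)
      linarith
    have hnt : (n : ℝ) * (1 / t) = π * s := by
      rw [ht]
      field_simp
      nlinarith [hs2]
    calc (x⁻¹) ^ n < (Real.exp (1 / t)) ^ n := by
          refine pow_lt_pow_left₀ hlt (by positivity) (by omega)
      _ = Real.exp ((n : ℝ) * (1 / t)) := (Real.exp_nat_mul _ n).symm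
      _ = Real.exp (π * s) := by rw [hnt]
  have hfinal : (Fintype.card (Nat.Partition n) : ℝ) < Real.exp (π * s) * Real.exp (π * s) := by
    calc (Fintype.card (Nat.Partition n) : ℝ) ≤ Real.exp (π * s) * (x⁻¹) ^ n := hcard2
      _ < Real.exp (π * s) * Real.exp (π * s) := by
          exact mul_lt_mul_of_pos_left hfact (Real.exp_pos _)
  have hsqrt : Real.sqrt (2 * n / 3) = 2 * s := by
    rw [hs, show (2 : ℝ) * n / 3 = 2 ^ 2 * (n / 6) by ring, Real.sqrt_mul (by positivity),
      Real.sqrt_sq (by norm_num)]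
  calc (Fintype.card (Nat.Partition n) : ℝ)
      < Real.exp (π * s) * Real.exp (π * s) := hfinal
    _ = Real.exp (π * Real.sqrt (2 * n / 3)) := by
        rw [← Real.exp_add, hsqrt]
        ring_nf
end

section
/- Let H ∈ 𝔽₂^{m×n} define a classical code with (δ, γ)-confinement, and fix x₀ ∈ 𝔽₂ⁿ with syndrome Σ₀ = H x₀. Suppose that for some ζ > 0 every connected ζ-subset of the support of Σ₀ (in the check graph) has size less than η. Then for every x ∈ 𝔽₂ⁿ whose support is connected (in the bit graph) with η ≤ |x| ≤ δ, the energy difference satisfies |H(x₀ + x)| − |H x₀| ≥ (γ − 2ζ·w_bit)·|x|, where w_bit is an upper bound on the number of checks containing any single bit. -/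
open Finset

/-- The support of a binary vector, as a `Finset`. -/
def bsupport {k : ℕ} (x : Fin k → ZMod 2) : Finset (Fin k) :=
  univ.filter (fun i => x i ≠ 0)

/-- The bit graph of a parity check matrix: two bits are adjacent if they share a check. -/
def bitGraph {m n : ℕ} (H : Matrix (Fin m) (Fin n) (ZMod 2)) : SimpleGraph (Fin n) :=
  SimpleGraph.fromRel (fun i j => ∃ c : Fin m, H c i = 1 ∧ H c j = 1)

/-- The check graph of a parity check matrix: two checks are adjacent if they share a bit. -/
def checkGraph {m n : ℕ} (H : Matrix (Fin m) (Fin n) (ZMod 2)) : SimpleGraph (Fin m) :=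
  SimpleGraph.fromRel (fun c c' => ∃ i : Fin n, H c i = 1 ∧ H c' i = 1)

lemma zmod2_eq_one_of_ne_zero : ∀ a : ZMod 2, a ≠ 0 → a = 1 := by decide

lemma zmod2_eq_zero_of_ne_one : ∀ a : ZMod 2, a ≠ 1 → a = 0 := by decide

/-- If two checks in `Γ` share a bit, they are reachable in the induced check graph. -/
lemma share_reach {m n : ℕ} (H : Matrix (Fin m) (Fin n) (ZMod 2)) (Γ : Finset (Fin m))
    (c c' : (↑Γ : Set (Fin m))) (i : Fin n) (h1 : H c.1 i = 1) (h2 : H c'.1 i = 1) :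
    ((checkGraph H).induce (↑Γ : Set (Fin m))).Reachable c c' := by
  by_cases hcc : c = c'
  · exact hcc ▸ SimpleGraph.Reachable.refl c
  · apply SimpleGraph.Adj.reachable
    show (checkGraph H).Adj c.1 c'.1
    rw [checkGraph, SimpleGraph.fromRel_adj]
    exact ⟨fun h => hcc (Subtype.ext h), Or.inl ⟨i, h1, h2⟩⟩

/-- Walking in the bit graph translates to reachability in the check graph. -/
lemma check_reach {m n : ℕ} (H : Matrix (Fin m) (Fin n) (ZMod 2))
    (X : Finset (Fin n)) (Γ : Finset (Fin m))
    (hΓ : ∀ (c : Fin m) (i : Fin n), i ∈ X → H c i = 1 → c ∈ Γ)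
    (a b : (↑X : Set (Fin n)))
    (w : ((bitGraph H).induce (↑X : Set (Fin n))).Walk a b) :
    ∀ (c c' : (↑Γ : Set (Fin m))), H c.1 a.1 = 1 → H c'.1 b.1 = 1 →
      ((checkGraph H).induce (↑Γ : Set (Fin m))).Reachable c c' := by
  induction w with
  | nil =>
    intro c c' h1 h2
    exact share_reach H Γ c c' _ h1 h2
  | @cons u v b hadj p ih =>
    intro c c' h1 h2
    have hadj' : (bitGraph H).Adj u.1 v.1 := hadj
    rw [bitGraph, SimpleGraph.fromRel_adj] at hadj'
    obtain ⟨-, hd⟩ := hadj'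
    obtain ⟨d, hdu, hdv⟩ : ∃ d, H d u.1 = 1 ∧ H d v.1 = 1 := by
      rcases hd with ⟨d, h3, h4⟩ | ⟨d, h3, h4⟩
      · exact ⟨d, h3, h4⟩
      · exact ⟨d, h4, h3⟩
    have huX : u.1 ∈ X := u.2
    have hdΓ : d ∈ Γ := hΓ d u.1 huX hdu
    exact (share_reach H Γ c ⟨d, hdΓ⟩ u.1 h1 hdu).trans (ih ⟨d, hdΓ⟩ c' hdv h2)

/-- barriers around states with sparse syndromes. Suppose `H` has
`(δ, γ)`-confinement, the bit-degree is at most `w_bit`, and every connected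
(in the check graph) `ζ`-subset of the support of the syndrome `Σ₀ = H x₀` has
size less than `η`. Then for every `x` with connected support (in the bit graph)
and `η ≤ |x| ≤ δ`, the energy difference satisfies
`|H(x₀+x)| − |H x₀| ≥ (γ − 2ζ·w_bit)·|x|`. -/
theorem stmt13 {m n : ℕ} (H : Matrix (Fin m) (Fin n) (ZMod 2))
    (δ γ ζ η : ℝ) (hγ : 0 < γ) (hζ : 0 < ζ) (w_bit : ℕ)
    (hconf : ∀ x : Fin n → ZMod 2, (hammingNorm x : ℝ) ≤ δ →
      γ * hammingNorm x ≤ (hammingNorm (H.mulVec x) : ℝ))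
    (hdeg : ∀ i : Fin n, ((univ.filter fun c : Fin m => H c i = 1).card : ℝ) ≤ w_bit)
    (x₀ : Fin n → ZMod 2)
    (hSigma : ∀ S : Finset (Fin m),
      ((checkGraph H).induce (S : Set (Fin m))).Connected →
      ζ * S.card ≤ ((bsupport (H.mulVec x₀) ∩ S).card : ℝ) → (S.card : ℝ) < η)
    (x : Fin n → ZMod 2)
    (hxconn : ((bitGraph H).induce ((bsupport x : Finset (Fin n)) : Set (Fin n))).Connected)
    (hlow : η ≤ (hammingNorm x : ℝ)) (hupp : (hammingNorm x : ℝ) ≤ δ) :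
    (γ - 2 * ζ * w_bit) * hammingNorm x
      ≤ (hammingNorm (H.mulVec (x₀ + x)) : ℝ) - hammingNorm (H.mulVec x₀) := by
  classical
  set X : Finset (Fin n) := bsupport x with hX
  have hnorm : hammingNorm x = X.card := rfl
  set Γ : Finset (Fin m) := X.biUnion (fun i => univ.filter fun c => H c i = 1) with hΓdef
  have memΓ : ∀ c : Fin m, c ∈ Γ ↔ ∃ i ∈ X, H c i = 1 := by
    intro c; simp [hΓdef]
  have hΓmem : ∀ (c : Fin m) (i : Fin n), i ∈ X → H c i = 1 → c ∈ Γ := by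
    intro c i hi h; exact (memΓ c).mpr ⟨i, hi, h⟩
  -- |Γ| ≤ w_bit * |X|
  have hΓcard : (Γ.card : ℝ) ≤ (w_bit : ℝ) * X.card := by
    have h1 : Γ.card ≤ ∑ i ∈ X, (univ.filter fun c => H c i = 1).card :=
      Finset.card_biUnion_le
    have h2 : ((∑ i ∈ X, (univ.filter fun c => H c i = 1).card : ℕ) : ℝ)
        ≤ ∑ _i ∈ X, (w_bit : ℝ) := by
      push_cast
      exact Finset.sum_le_sum fun i _ => hdeg i
    calc (Γ.card : ℝ) ≤ ((∑ i ∈ X, (univ.filter fun c => H c i = 1).card : ℕ) : ℝ) := by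
            exact_mod_cast h1
      _ ≤ ∑ _i ∈ X, (w_bit : ℝ) := h2
      _ = (w_bit : ℝ) * X.card := by rw [Finset.sum_const, nsmul_eq_mul, mul_comm]
  -- |X| ≤ |Γ| via linear independence of the columns indexed by X
  have hli : LinearIndependent (ZMod 2) (fun i : X => fun c : Γ => H c.1 i.1) := by
    rw [Fintype.linearIndependent_iff]
    intro a ha
    set x' : Fin n → ZMod 2 := fun j => if h : j ∈ X then a ⟨j, h⟩ else 0 with hx'
    have hsupp : ∀ j, x' j ≠ 0 → j ∈ X := by
      intro j hj
      by_contra hjX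
      exact hj (by simp [hx', hjX])
    have hmv : H.mulVec x' = 0 := by
      funext c
      show ∑ j, H c j * x' j = 0
      have hzero : ∀ j ∈ (univ : Finset (Fin n)), j ∉ X → H c j * x' j = 0 := by
        intro j _ hjX
        simp [hx', hjX]
      rw [← Finset.sum_subset (Finset.subset_univ X) hzero]
      by_cases hc : c ∈ Γ
      · have := congrFun ha ⟨c, hc⟩
        simp only [Finset.sum_apply, Pi.smul_apply, smul_eq_mul, Pi.zero_apply] at this
        rw [← Finset.sum_attach X (fun j => H c j * x' j)]
        rw [← this]
        apply Finset.sum_congr rfl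
        intro j _
        rw [hx']
        simp [j.2, mul_comm]
      · apply Finset.sum_eq_zero
        intro j hj
        have : H c j = 0 := by
          apply zmod2_eq_zero_of_ne_one
          intro h1
          exact hc (hΓmem c j hj h1)
        simp [this]
    have hnx' : (hammingNorm x' : ℝ) ≤ δ := by
      have h1 : hammingNorm x' ≤ X.card := by
        apply Finset.card_le_card
        intro j hj
        simp only [hammingNorm, Finset.mem_filter, Finset.mem_univ, true_and] at hj
        exact hsupp j hj
      calc (hammingNorm x' : ℝ) ≤ X.card := by exact_mod_cast h1
        _ ≤ δ := by rw [← hnorm]; exact hupp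
    have := hconf x' hnx'
    rw [hmv] at this
    have hzero : (hammingNorm x' : ℝ) = 0 := by
      have h0 : hammingNorm (0 : Fin m → ZMod 2) = 0 := by simp [hammingNorm]
      rw [h0] at this
      push_cast at this
      nlinarith
    have hx'0 : ∀ j, x' j = 0 := by
      intro j
      by_contra hj
      have : 0 < hammingNorm x' := by
        rw [hammingNorm_pos_iff]
        intro h
        exact hj (congrFun h j)
      have : (0 : ℝ) < hammingNorm x' := by exact_mod_cast this
      linarith
    intro i
    have h := hx'0 i.1
    have h2 : x' i.1 = a i := dif_pos i.2
    rw [← h2]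
    exact h
  have hXΓ : X.card ≤ Γ.card := by
    have h1 := hli.fintype_card_le_finrank
    rwa [Module.finrank_fintype_fun_eq_card, Fintype.card_coe, Fintype.card_coe] at h1
  -- X is nonempty
  have hXne : X.Nonempty := by
    obtain ⟨⟨i, hi⟩⟩ := hxconn.nonempty
    exact ⟨i, hi⟩
  have hXpos : 0 < X.card := Finset.card_pos.mpr hXne
  have hΓne : Γ.Nonempty := Finset.card_pos.mp (lt_of_lt_of_le hXpos hXΓ)
  -- Γ is connected in the check graph
  have hΓconn : ((checkGraph H).induce (↑Γ : Set (Fin m))).Connected := by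
    have hne : Nonempty (↑Γ : Set (Fin m)) := ⟨⟨hΓne.choose, hΓne.choose_spec⟩⟩
    refine ⟨fun c c' => ?_⟩
    obtain ⟨i, hi, hci⟩ := (memΓ c.1).mp c.2
    obtain ⟨i', hi', hci'⟩ := (memΓ c'.1).mp c'.2
    obtain ⟨w⟩ := hxconn.preconnected ⟨i, hi⟩ ⟨i', hi'⟩
    exact check_reach H X Γ hΓmem ⟨i, hi⟩ ⟨i', hi'⟩ w c c' hci hci'
  -- sparse intersection with the syndrome
  set A : Finset (Fin m) := bsupport (H.mulVec x₀) with hA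
  set B : Finset (Fin m) := bsupport (H.mulVec x) with hB
  have hηΓ : η ≤ (Γ.card : ℝ) := by
    calc η ≤ (hammingNorm x : ℝ) := hlow
      _ = (X.card : ℝ) := by rw [hnorm]
      _ ≤ (Γ.card : ℝ) := by exact_mod_cast hXΓ
  have hsparse : ((A ∩ Γ).card : ℝ) < ζ * Γ.card := by
    by_contra hcon
    push_neg at hcon
    exact absurd (hSigma Γ hΓconn hcon) (not_lt.mpr hηΓ)
  -- B ⊆ Γ
  have hBΓ : B ⊆ Γ := by
    intro c hc
    rw [hB, bsupport, Finset.mem_filter] at hc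
    obtain ⟨-, hc⟩ := hc
    have hc' : ∑ j, H c j * x j ≠ 0 := hc
    have : ∃ j, H c j * x j ≠ 0 := by
      by_contra hall
      push_neg at hall
      exact hc' (Finset.sum_eq_zero fun j _ => hall j)
    obtain ⟨j, hj⟩ := this
    have hHj : H c j ≠ 0 := fun h => hj (by simp [h])
    have hxj : x j ≠ 0 := fun h => hj (by simp [h])
    exact hΓmem c j (by simp [hX, bsupport, hxj]) (zmod2_eq_one_of_ne_zero _ hHj)
  -- the symmetric difference identity
  have hC : bsupport (H.mulVec (x₀ + x)) = (A \ B) ∪ (B \ A) := by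
    ext c
    have hadd : H.mulVec (x₀ + x) c = H.mulVec x₀ c + H.mulVec x c := by
      rw [Matrix.mulVec_add]; rfl
    simp only [bsupport, Finset.mem_union, Finset.mem_sdiff, Finset.mem_filter,
      Finset.mem_univ, true_and, hadd, hA, hB]
    generalize H.mulVec x₀ c = p
    generalize H.mulVec x c = q
    revert p q
    decide
  have hcardC : (hammingNorm (H.mulVec (x₀ + x)) : ℝ)
      = (A.card : ℝ) + B.card - 2 * (A ∩ B).card := by
    have h1 : hammingNorm (H.mulVec (x₀ + x)) = ((A \ B) ∪ (B \ A)).card := by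
      rw [← hC]; rfl
    have h2 : ((A \ B) ∪ (B \ A)).card = (A \ B).card + (B \ A).card :=
      Finset.card_union_of_disjoint disjoint_sdiff_sdiff
    have h3 : (A ∩ B).card + (A \ B).card = A.card := Finset.card_inter_add_card_sdiff A B
    have h4 : (B ∩ A).card + (B \ A).card = B.card := Finset.card_inter_add_card_sdiff B A
    have h5 : (B ∩ A).card = (A ∩ B).card := by rw [Finset.inter_comm]
    have h3' : ((A ∩ B).card : ℝ) + (A \ B).card = A.card := by exact_mod_cast h3
    have h4' : ((B ∩ A).card : ℝ) + (B \ A).card = B.card := by exact_mod_cast h4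
    have h5' : ((B ∩ A).card : ℝ) = (A ∩ B).card := by exact_mod_cast h5
    rw [h1, h2]
    push_cast
    linarith
  -- final assembly
  have hBcard : γ * X.card ≤ (B.card : ℝ) := by
    have := hconf x hupp
    rw [hnorm] at this
    exact this
  have hAB : ((A ∩ B).card : ℝ) ≤ ((A ∩ Γ).card : ℝ) := by
    exact_mod_cast Finset.card_le_card (Finset.inter_subset_inter (Finset.Subset.refl A) hBΓ)
  have hmul : ζ * (Γ.card : ℝ) ≤ ζ * ((w_bit : ℝ) * X.card) :=
    mul_le_mul_of_nonneg_left hΓcard hζ.le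
  have hA0 : (hammingNorm (H.mulVec x₀) : ℝ) = (A.card : ℝ) := rfl
  rw [hnorm, hcardC, hA0]
  nlinarith [hsparse, hBcard, hAB, hmul]
end

section
/- Define f(T) = (1−r)·[log(1 + e^{−1/T}) + 1/(T(1 + e^{1/T}))] − log Υ(2(1−r)/(γ(1 + e^{1/T}))) with Υ(ρ) = ρ^{−ρ}(1−ρ)^{ρ−1}. For r = 1/421 and γ = 3, f(T) > 0 for all sufficiently small T > 0, and f(T) → 0 as T → 0⁺. -/
/-- `Υ(ρ) = ρ^{−ρ}(1−ρ)^{ρ−1}` (real powers; `Υ(0) = 1` by `rpow` conventions). -/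
noncomputable def Upsilon (ρ : ℝ) : ℝ := ρ ^ (-ρ) * (1 - ρ) ^ (ρ - 1)

/-- The function `f(T)` from the upper bound on the weight of typical Gibbs
state components, for rate `r` and confinement coefficient `γ`. -/
noncomputable def fTQSG (r γ T : ℝ) : ℝ :=
  (1 - r) * (Real.log (1 + Real.exp (-1 / T)) + 1 / (T * (1 + Real.exp (1 / T))))
    - Real.log (Upsilon (2 * (1 - r) / (γ * (1 + Real.exp (1 / T)))))

lemma log_Upsilon {ρ : ℝ} (h0 : 0 < ρ) (h1 : ρ < 1) :
    Real.log (Upsilon ρ) = -ρ * Real.log ρ + (ρ - 1) * Real.log (1 - ρ) := by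
  unfold Upsilon
  rw [Real.log_mul (Real.rpow_pos_of_pos h0 _).ne' (Real.rpow_pos_of_pos (by linarith) _).ne',
    Real.log_rpow h0, Real.log_rpow (by linarith)]

lemma rho_facts (x ρ : ℝ) (hx : 0 < x) (hρ : ρ = 280 * x / (421 * (1 + x))) :
    0 < ρ ∧ ρ ≤ x ∧ ρ < 1 := by
  have hx1 : (0:ℝ) < 1 + x := by linarith
  have h0 : 0 < ρ := by rw [hρ]; positivity
  have hx2 : ρ * (421 * (1 + x)) = 280 * x := by rw [hρ]; field_simp
  exact ⟨h0, by nlinarith, by nlinarith⟩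

lemma fTQSG_eq (T : ℝ) (hT : 0 < T) :
    fTQSG (1/421) 3 T =
      420/421 * (Real.log (1 + Real.exp (-1/T))
        + (1/T) * (Real.exp (-1/T) / (1 + Real.exp (-1/T))))
      + (280 * Real.exp (-1/T) / (421 * (1 + Real.exp (-1/T))))
          * Real.log (280 * Real.exp (-1/T) / (421 * (1 + Real.exp (-1/T))))
      + (1 - 280 * Real.exp (-1/T) / (421 * (1 + Real.exp (-1/T))))
          * Real.log (1 - 280 * Real.exp (-1/T) / (421 * (1 + Real.exp (-1/T)))) := by
  have hx : 0 < Real.exp (-1/T) := Real.exp_pos _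
  obtain ⟨x, hxdef⟩ : ∃ x, x = Real.exp (-1/T) := ⟨_, rfl⟩
  rw [← hxdef] at hx
  have hex : Real.exp (1/T) = x⁻¹ := by
    rw [hxdef, ← Real.exp_neg]; ring_nf
  have hx1 : 0 < 1 + x := by linarith
  have hρ : (2 : ℝ) * (1 - 1/421) / (3 * (1 + Real.exp (1/T))) = 280 * x / (421 * (1 + x)) := by
    rw [hex]; field_simp; ring
  obtain ⟨hρ0, hρs, hρ1⟩ := rho_facts x _ hx rfl
  have h2 : 1 / (T * (1 + x⁻¹)) = (1/T) * (x / (1 + x)) := by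
    field_simp
    ring
  unfold fTQSG
  rw [hρ, log_Upsilon hρ0 hρ1, hex, h2, ← hxdef]
  ring

lemma aux_ub (x u ρ : ℝ) (hx : 0 < x) (hu : 0 < u)
    (hρ : ρ = 280 * x / (421 * (1 + x))) :
    420/421 * (Real.log (1 + x) + u * (x / (1 + x)))
      + ρ * Real.log ρ + (1 - ρ) * Real.log (1 - ρ) ≤ x + u * x := by
  have hx1 : (0:ℝ) < 1 + x := by linarith
  obtain ⟨hρ0, hρs, hρ1⟩ := rho_facts x ρ hx hρ
  obtain ⟨s, hsdef⟩ : ∃ s, s = x / (1 + x) := ⟨_, rfl⟩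
  rw [← hsdef]
  have h1 : ρ * Real.log ρ ≤ 0 :=
    mul_nonpos_of_nonneg_of_nonpos hρ0.le (Real.log_nonpos hρ0.le hρ1.le)
  have h2 : (1 - ρ) * Real.log (1 - ρ) ≤ 0 :=
    mul_nonpos_of_nonneg_of_nonpos (by linarith) (Real.log_nonpos (by linarith) (by linarith))
  have h3 : Real.log (1 + x) ≤ x := by
    have := Real.log_le_sub_one_of_pos hx1; linarith
  have h4 : s ≤ x := by
    rw [hsdef, div_le_iff₀ hx1]; nlinarith
  have hs0 : 0 ≤ s := by rw [hsdef]; positivity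
  have h5 : u * s ≤ u * x := mul_le_mul_of_nonneg_left h4 hu.le
  have h6 : 0 ≤ Real.log (1 + x) := Real.log_nonneg (by linarith)
  have hus : 0 ≤ u * s := mul_nonneg hu.le hs0
  linarith

set_option maxHeartbeats 1000000 in
lemma aux_pos (x u ρ : ℝ) (hx0 : 0 < x) (hu : 20 < u) (hxs : x ≤ 1/21)
    (hlogx : Real.log x = -u) (hρ : ρ = 280 * x / (421 * (1 + x))) :
    0 < 420/421 * (Real.log (1 + x) + u * (x / (1 + x)))
      + ρ * Real.log ρ + (1 - ρ) * Real.log (1 - ρ) := by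
  have hx1 : (0:ℝ) < 1 + x := by linarith
  obtain ⟨hρ0, hρs, hρ1⟩ := rho_facts x ρ hx0 hρ
  have hρh : ρ < 1/2 := by nlinarith
  obtain ⟨s, hsdef⟩ : ∃ s, s = x / (1 + x) := ⟨_, rfl⟩
  rw [← hsdef]
  have hs0 : 0 ≤ s := by rw [hsdef]; positivity
  have hρs' : ρ = 280/421 * s := by
    rw [hρ, hsdef]; field_simp
  -- log ρ decomposition
  have e1 : Real.log (280*x) = Real.log 280 + Real.log x := Real.log_mul (by norm_num) hx0.ne'
  have e2 : Real.log (421*(1+x)) = Real.log 421 + Real.log (1+x) :=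
    Real.log_mul (by norm_num) hx1.ne'
  have e3 : Real.log (280*x/(421*(1+x))) = Real.log (280*x) - Real.log (421*(1+x)) :=
    Real.log_div (by positivity) (by positivity)
  have e4 : Real.log ((280:ℝ)/421) = Real.log 280 - Real.log 421 :=
    Real.log_div (by norm_num) (by norm_num)
  have hlogρ : Real.log ρ = Real.log (280/421) - u - Real.log (1 + x) := by
    rw [hρ, e3, e1, e2, e4, hlogx]; ring
  have E : 420/421 * (Real.log (1 + x) + u * s)
      + ρ * Real.log ρ + (1 - ρ) * Real.log (1 - ρ)
      = 420/421 * Real.log (1+x) + 140/421 * (u * s)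
        + ρ * Real.log (280/421) - ρ * Real.log (1+x) + (1-ρ) * Real.log (1-ρ) := by
    rw [hlogρ, hρs']; ring
  rw [E]
  -- bounds
  have hc : (-1:ℝ) ≤ Real.log (280/421) := by
    have h1 : Real.log ((280:ℝ)/421) = - Real.log (421/280) := by
      rw [← Real.log_inv]; norm_num
    have h2 := Real.log_le_sub_one_of_pos (show (0:ℝ) < 421/280 by norm_num)
    rw [h1]; linarith
  have hlog1x : 0 ≤ Real.log (1 + x) := Real.log_nonneg (by linarith)
  have hlog1x' : Real.log (1 + x) ≤ x := by
    have := Real.log_le_sub_one_of_pos hx1; linarith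
  have hlog1ρ : -2 * ρ ≤ Real.log (1 - ρ) := by
    have h1 : 0 < 1 - ρ := by linarith
    have h2 := Real.log_le_sub_one_of_pos (show (0:ℝ) < (1-ρ)⁻¹ by positivity)
    rw [Real.log_inv] at h2
    have h3 : (1-ρ)⁻¹ - 1 = ρ / (1-ρ) := by field_simp; ring
    have h4 : ρ / (1-ρ) ≤ 2*ρ := by
      rw [div_le_iff₀ h1]; nlinarith
    linarith
  have hlog1ρ' : Real.log (1 - ρ) ≤ 0 := Real.log_nonpos (by linarith) (by linarith)
  have hfrac : 21 * x / 22 ≤ s := by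
    rw [hsdef, div_le_div_iff₀ (by norm_num) hx1]; nlinarith
  have t1 : 0 ≤ 420/421 * Real.log (1+x) := by positivity
  have t2a : 20 * s ≤ u * s := mul_le_mul_of_nonneg_right hu.le hs0
  have t2 : 6 * x ≤ 140/421 * (u * s) := by linarith
  have t3 : -x ≤ ρ * Real.log (280/421) := by
    have := mul_le_mul_of_nonneg_left hc hρ0.le
    linarith
  have t4 : ρ * Real.log (1+x) ≤ x := by
    have h1 : ρ * Real.log (1+x) ≤ x * x := mul_le_mul hρs hlog1x' hlog1x hx0.le
    have h2 : x * x ≤ (1/21) * x := mul_le_mul_of_nonneg_right hxs hx0.le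
    linarith
  have t5 : -2*x ≤ (1-ρ) * Real.log (1-ρ) := by
    have h1 : ρ * Real.log (1-ρ) ≤ 0 := mul_nonpos_of_nonneg_of_nonpos hρ0.le hlog1ρ'
    nlinarith [hlog1ρ, hρs, h1]
  linarith

lemma fpos (T : ℝ) (hT : 0 < T) (hT' : T < 1/20) : 0 < fTQSG (1/421) 3 T := by
  rw [fTQSG_eq T hT]
  have hu : (20:ℝ) < 1/T := by
    rw [lt_div_iff₀ hT]; linarith
  have hx0 : 0 < Real.exp (-1/T) := Real.exp_pos _
  have hlogx : Real.log (Real.exp (-1/T)) = -(1/T) := by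
    rw [Real.log_exp]; ring
  have hxs : Real.exp (-1/T) ≤ 1/21 := by
    have h1 : 1 + 1/T ≤ Real.exp (1/T) := by linarith [Real.add_one_le_exp (1/T)]
    have h2 : Real.exp (-1/T) = (Real.exp (1/T))⁻¹ := by
      rw [← Real.exp_neg]; ring_nf
    rw [h2]
    rw [inv_le_comm₀ (by positivity) (by norm_num)]
    linarith
  exact aux_pos _ _ _ hx0 hu hxs hlogx rfl

lemma fub (T : ℝ) (hT : 0 < T) :
    fTQSG (1/421) 3 T ≤ Real.exp (-1/T) + (1/T) * Real.exp (-1/T) := by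
  rw [fTQSG_eq T hT]
  exact aux_ub _ _ _ (Real.exp_pos _) (by positivity) rfl

/-- for `r = 1/421` and `γ = 3`, `f(T) > 0` for all sufficiently
small `T > 0`, and `f(T) → 0` as `T → 0⁺`. -/
theorem stmt17 :
    (∃ T₀ : ℝ, 0 < T₀ ∧ ∀ T : ℝ, 0 < T → T < T₀ → 0 < fTQSG (1/421) 3 T)
    ∧ Filter.Tendsto (fTQSG (1/421) 3) (nhdsWithin 0 (Set.Ioi 0)) (nhds 0) := by
  constructor
  · exact ⟨1/20, by norm_num, fun T hT hT' => fpos T hT hT'⟩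
  · have hmem : Set.Ioo (0:ℝ) (1/20) ∈ nhdsWithin 0 (Set.Ioi 0) :=
      Ioo_mem_nhdsGT_of_mem (by norm_num : (0:ℝ) ∈ Set.Ico 0 (1/20))
    apply tendsto_of_tendsto_of_tendsto_of_le_of_le' (g := fun _ => (0:ℝ))
      (h := fun T => Real.exp (-1/T) + (1/T) * Real.exp (-1/T))
    · exact tendsto_const_nhds
    · have h1 : Filter.Tendsto (fun T : ℝ => 1/T) (nhdsWithin 0 (Set.Ioi 0)) Filter.atTop := by
        simpa [one_div] using (tendsto_inv_nhdsGT_zero (𝕜 := ℝ))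
      have h2 : Filter.Tendsto (fun u : ℝ => Real.exp (-u) + u * Real.exp (-u))
          Filter.atTop (nhds 0) := by
        have := Real.tendsto_exp_neg_atTop_nhds_zero.add
          (Real.tendsto_pow_mul_exp_neg_atTop_nhds_zero 1)
        simpa using this
      have h3 := h2.comp h1
      have heq : (fun T : ℝ => Real.exp (-1/T) + (1/T) * Real.exp (-1/T))
          = (fun u : ℝ => Real.exp (-u) + u * Real.exp (-u)) ∘ (fun T => 1/T) := by
        funext T; simp [Function.comp, neg_div]
      rw [heq]; exact h3
    · filter_upwards [hmem] with T hT
      exact (fpos T hT.1 hT.2).le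
    · filter_upwards [hmem] with T hT
      exact fub T hT.1
end
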